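/- Let f be m-strongly convex and differentiable with minimizer x*, let λ > 0, z a point, and w the minimizer of ψ(x) = f(x) + (λ/2)‖x - z‖². Then ‖w - x*‖² ≤ (λ²/(m(m+λ)))‖z - x*‖². -/

import Mathlib

open scoped InnerProductSpace

lemma sq_grad {n : ℕ} (lam : ℝ) (z w : EuclideanSpace ℝ (Fin n)) :
    HasGradientAt (fun x => lam / 2 * ‖x - z‖ ^ 2) (lam • (w - z)) w := by
  have h1 : HasFDerivAt (fun x : EuclideanSpace ℝ (Fin n) => x - z)
      (ContinuousLinearMap.id ℝ _) w := (hasFDerivAt_id w).sub_const z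
  have h2 := (h1.inner ℝ h1).const_mul (lam / 2)
  have heq : (fun x : EuclideanSpace ℝ (Fin n) => lam / 2 * ⟪x - z, x - z⟫_ℝ)
      = fun x => lam / 2 * ‖x - z‖ ^ 2 := by
    funext x; rw [real_inner_self_eq_norm_sq]
  rw [heq] at h2
  rw [hasGradientAt_iff_hasFDerivAt]
  convert h2 using 1
  · rfl
  ext y
  rw [InnerProductSpace.toDual_apply_apply]
  simp only [ContinuousLinearMap.coe_smul', Pi.smul_apply, ContinuousLinearMap.coe_comp',
    Function.comp_apply, ContinuousLinearMap.prod_apply, ContinuousLinearMap.coe_id', id_eq,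
    fderivInnerCLM_apply, smul_eq_mul, real_inner_smul_left]
  rw [real_inner_comm y (w - z)]
  ring

theorem stmt_5 {n : ℕ} (f : EuclideanSpace ℝ (Fin n) → ℝ) (m lam : ℝ)
    (hm : 0 < m) (hlam : 0 < lam)
    (hdiff : Differentiable ℝ f)
    (hconv : ∀ x y, f x + ⟪gradient f x, y - x⟫_ℝ + m / 2 * ‖y - x‖ ^ 2 ≤ f y)
    (xstar z w : EuclideanSpace ℝ (Fin n))
    (hmin : ∀ x, f xstar ≤ f x)
    (hw : ∀ x, f w + lam / 2 * ‖w - z‖ ^ 2 ≤ f x + lam / 2 * ‖x - z‖ ^ 2) :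
    ‖w - xstar‖ ^ 2 ≤ lam ^ 2 / (m * (m + lam)) * ‖z - xstar‖ ^ 2 := by
  -- gradient vanishes at xstar
  have hx0 : gradient f xstar = 0 := by
    have hloc : IsLocalMin f xstar := Filter.Eventually.of_forall fun x => hmin x
    have h := hloc.fderiv_eq_zero
    unfold gradient
    rw [h, map_zero]
  -- first-order condition at w
  have hgw : gradient f w = lam • (z - w) := by
    have hf : HasFDerivAt f (InnerProductSpace.toDual ℝ _ (gradient f w)) w :=
      (hdiff w).hasGradientAt.hasFDerivAt
    have hq := (sq_grad lam z w).hasFDerivAt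
    have hψ := hf.add hq
    have hloc : IsLocalMin (fun x => f x + lam / 2 * ‖x - z‖ ^ 2) w :=
      Filter.Eventually.of_forall fun x => hw x
    have hz : InnerProductSpace.toDual ℝ _ (gradient f w)
        + InnerProductSpace.toDual ℝ _ (lam • (w - z)) = 0 := by
      rw [← hψ.fderiv]; exact hloc.fderiv_eq_zero
    rw [← map_add] at hz
    have := (InnerProductSpace.toDual ℝ (EuclideanSpace ℝ (Fin n))).map_zero
    have h0 : gradient f w + lam • (w - z) = 0 :=
      (InnerProductSpace.toDual ℝ _).injective (by rw [hz, map_zero])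
    have : gradient f w = - (lam • (w - z)) := by linear_combination (norm := abel) h0
    rw [this, ← smul_neg, neg_sub]
  have h1 := hconv xstar w
  have h2 := hconv w xstar
  rw [hx0, inner_zero_left] at h1
  rw [hgw, real_inner_smul_left] at h2
  have hnorm : ‖xstar - w‖ = ‖w - xstar‖ := norm_sub_rev _ _
  rw [hnorm] at h2
  have hrewrite : ⟪z - w, xstar - w⟫_ℝ = -⟪z - xstar, w - xstar⟫_ℝ + ‖w - xstar‖ ^ 2 := by
    have hz' : z - w = (z - xstar) - (w - xstar) := by abel
    have hx' : xstar - w = -(w - xstar) := by abel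
    rw [hz', hx', inner_neg_right, inner_sub_left, real_inner_self_eq_norm_sq]
    ring
  rw [hrewrite] at h2
  have hcs : ⟪z - xstar, w - xstar⟫_ℝ ≤ ‖z - xstar‖ * ‖w - xstar‖ := real_inner_le_norm _ _
  have key : (m + lam) * ‖w - xstar‖ ^ 2 ≤ lam * (‖z - xstar‖ * ‖w - xstar‖) := by
    nlinarith [h1, h2, hcs]
  rw [div_mul_eq_mul_div, le_div_iff₀ (by positivity)]
  rcases eq_or_lt_of_le (norm_nonneg (w - xstar)) with h0 | h0
  · rw [← h0]
    have : (0:ℝ) ≤ lam ^ 2 * ‖z - xstar‖ ^ 2 := by positivity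
    nlinarith
  · have hv : (m + lam) * ‖w - xstar‖ ≤ lam * ‖z - xstar‖ := by nlinarith [key, h0]
    have hsq := mul_le_mul hv hv (by positivity) (by nlinarith [norm_nonneg (z - xstar)])
    nlinarith [hsq, norm_nonneg (w - xstar), sq_nonneg (‖w - xstar‖)]
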